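/- Let S⁴' = {x ∈ S⁶ : x₆ = x₇ = 0}. The set Δ_σ = {x ∈ S⁴' : x₁ ≥ 0, x₁² + x₂² + x₃² ≤ 1/2, x₄² + x₅² ≥ 1/2} ∪ {x ∈ S⁴' : x₁ < 0, x₁² + x₄² + x₅² ≥ 1/2, x₂² + x₃² ≤ 1/2} is homeomorphic to the closed unit ball in ℝ⁴, and its frontier as a subset of the topological space S⁴' equals Σ = {x ∈ S⁶ : x₁ ≥ 0, x₁² + x₂² + x₃² = 1/2, x₄² + x₅² = 1/2} ∪ {x ∈ S⁶ : x₁ < 0, x₁² + x₄² + x₅² = 1/2, x₂² + x₃² = 1/2}. -/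

import Mathlib

/- STATEMENT 4: Let S⁴' = {x ∈ S⁶ : x₆ = x₇ = 0}. The set
   Δ_σ = {x ∈ S⁴' : x₁ ≥ 0, x₁²+x₂²+x₃² ≤ 1/2, x₄²+x₅² ≥ 1/2}
       ∪ {x ∈ S⁴' : x₁ < 0, x₁²+x₄²+x₅² ≥ 1/2, x₂²+x₃² ≤ 1/2}
   is homeomorphic to the closed unit ball in ℝ⁴, and its frontier in S⁴'
   equals Σ (defined as in Statement 3). -/

noncomputable section

abbrev E (n : ℕ) : Type := EuclideanSpace ℝ (Fin n)

/-- The subsphere `S⁴' = {x ∈ S⁶ : x₆ = x₇ = 0}`. -/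
def S4' : Set (E 7) :=
  {x | x ∈ Metric.sphere (0 : E 7) 1 ∧ x 5 = 0 ∧ x 6 = 0}

/-- The 4-disk `Δ_σ`. -/
def DeltaSigma : Set (E 7) :=
  {x | x ∈ S4' ∧ 0 ≤ x 0 ∧
       x 0 ^ 2 + x 1 ^ 2 + x 2 ^ 2 ≤ 1 / 2 ∧ 1 / 2 ≤ x 3 ^ 2 + x 4 ^ 2} ∪
  {x | x ∈ S4' ∧ x 0 < 0 ∧
       1 / 2 ≤ x 0 ^ 2 + x 3 ^ 2 + x 4 ^ 2 ∧ x 1 ^ 2 + x 2 ^ 2 ≤ 1 / 2}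

/-- The sphere `Σ = σ(S³) ⊂ S⁶` of the paper. -/
def SigmaSet : Set (E 7) :=
  {x | x ∈ Metric.sphere (0 : E 7) 1 ∧ 0 ≤ x 0 ∧
       x 0 ^ 2 + x 1 ^ 2 + x 2 ^ 2 = 1 / 2 ∧ x 3 ^ 2 + x 4 ^ 2 = 1 / 2} ∪
  {x | x ∈ Metric.sphere (0 : E 7) 1 ∧ x 0 < 0 ∧
       x 0 ^ 2 + x 3 ^ 2 + x 4 ^ 2 = 1 / 2 ∧ x 1 ^ 2 + x 2 ^ 2 = 1 / 2}

namespace St4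

def f7 (x : E 7) : ℝ := x 1 ^ 2 + x 2 ^ 2 + max (x 0) 0 ^ 2

lemma cont_apply7 (i : Fin 7) : Continuous fun x : E 7 => x i :=
  (EuclideanSpace.proj i).continuous

lemma cont_apply4 (i : Fin 4) : Continuous fun x : E 4 => x i :=
  (EuclideanSpace.proj i).continuous

lemma continuous_f7 : Continuous f7 := by
  unfold f7
  exact (((cont_apply7 1).pow 2).add ((cont_apply7 2).pow 2)).add
    (((cont_apply7 0).max continuous_const).pow 2)

lemma norm_sq_7 (x : E 7) :
    ‖x‖ ^ 2 = x 0^2 + x 1^2 + x 2^2 + x 3^2 + x 4^2 + x 5^2 + x 6^2 := by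
  rw [EuclideanSpace.norm_eq, Real.sq_sqrt (by positivity)]
  simp [Fin.sum_univ_seven, Real.norm_eq_abs, sq_abs]

lemma norm_sq_4 (v : E 4) :
    ‖v‖ ^ 2 = v 0^2 + v 1^2 + v 2^2 + v 3^2 := by
  rw [EuclideanSpace.norm_eq, Real.sq_sqrt (by positivity)]
  simp [Fin.sum_univ_four, Real.norm_eq_abs, sq_abs]

lemma sum_eq_one {x : E 7} (hx : x ∈ S4') :
    x 0^2 + x 1^2 + x 2^2 + x 3^2 + x 4^2 = 1 := by
  obtain ⟨h1, h5, h6⟩ := hx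
  have hn : ‖x‖ = 1 := by simpa using h1
  have h := norm_sq_7 x
  rw [hn, h5, h6] at h
  nlinarith [h]

lemma mem_S4'_of {x : E 7} (h5 : x 5 = 0) (h6 : x 6 = 0)
    (hs : x 0^2 + x 1^2 + x 2^2 + x 3^2 + x 4^2 = 1) : x ∈ S4' := by
  refine ⟨?_, h5, h6⟩
  have h : ‖x‖ ^ 2 = 1 := by rw [norm_sq_7, h5, h6]; linarith
  have hn : ‖x‖ = 1 := by nlinarith [norm_nonneg x]
  simpa using hn

lemma mem_Delta_iff {x : E 7} (hx : x ∈ S4') :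
    x ∈ DeltaSigma ↔ f7 x ≤ 1/2 := by
  have hs := sum_eq_one hx
  unfold DeltaSigma f7
  constructor
  · rintro (⟨-, h0, h1, -⟩ | ⟨-, h0, -, h2⟩)
    · rw [max_eq_left h0]; linarith
    · rw [max_eq_right h0.le]; nlinarith
  · intro h
    by_cases h0 : 0 ≤ x 0
    · rw [max_eq_left h0] at h
      exact Or.inl ⟨hx, h0, by linarith, by linarith⟩
    · push_neg at h0
      rw [max_eq_right h0.le] at h
      exact Or.inr ⟨hx, h0, by nlinarith, by nlinarith⟩

lemma mem_Sigma_iff {x : E 7} (hx : x ∈ S4') :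
    x ∈ SigmaSet ↔ f7 x = 1/2 := by
  have hs := sum_eq_one hx
  unfold SigmaSet f7
  constructor
  · rintro (⟨-, h0, h1, -⟩ | ⟨-, h0, -, h2⟩)
    · rw [max_eq_left h0]; linarith
    · rw [max_eq_right h0.le]; nlinarith
  · intro h
    by_cases h0 : 0 ≤ x 0
    · rw [max_eq_left h0] at h
      exact Or.inl ⟨hx.1, h0, by linarith, by linarith⟩
    · push_neg at h0
      rw [max_eq_right h0.le] at h
      exact Or.inr ⟨hx.1, h0, by nlinarith, by nlinarith⟩

def Delta' : Set (E 7) := {x | x ∈ S4' ∧ f7 x ≤ 1/2}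

lemma DeltaSigma_eq : DeltaSigma = Delta' := by
  ext x
  constructor
  · intro h
    have hx : x ∈ S4' := by rcases h with ⟨h, -⟩ | ⟨h, -⟩ <;> exact h
    exact ⟨hx, (mem_Delta_iff hx).1 h⟩
  · rintro ⟨hx, hf⟩
    exact (mem_Delta_iff hx).2 hf

-- point builders
def mk7 (a b c d e : ℝ) : E 7 :=
  a • EuclideanSpace.single 0 1 + b • EuclideanSpace.single 1 1 +
  c • EuclideanSpace.single 2 1 + d • EuclideanSpace.single 3 1 +
  e • EuclideanSpace.single 4 1

@[simp] lemma mk7_0 (a b c d e : ℝ) : mk7 a b c d e 0 = a := by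
  simp [mk7, EuclideanSpace.single_apply]
@[simp] lemma mk7_1 (a b c d e : ℝ) : mk7 a b c d e 1 = b := by
  simp [mk7, EuclideanSpace.single_apply]
@[simp] lemma mk7_2 (a b c d e : ℝ) : mk7 a b c d e 2 = c := by
  simp [mk7, EuclideanSpace.single_apply]
@[simp] lemma mk7_3 (a b c d e : ℝ) : mk7 a b c d e 3 = d := by
  simp [mk7, EuclideanSpace.single_apply]
@[simp] lemma mk7_4 (a b c d e : ℝ) : mk7 a b c d e 4 = e := by
  simp [mk7, EuclideanSpace.single_apply]
@[simp] lemma mk7_5 (a b c d e : ℝ) : mk7 a b c d e 5 = 0 := by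
  simp [mk7, EuclideanSpace.single_apply]
@[simp] lemma mk7_6 (a b c d e : ℝ) : mk7 a b c d e 6 = 0 := by
  simp [mk7, EuclideanSpace.single_apply]

def mk4 (a b c d : ℝ) : E 4 :=
  a • EuclideanSpace.single 0 1 + b • EuclideanSpace.single 1 1 +
  c • EuclideanSpace.single 2 1 + d • EuclideanSpace.single 3 1

@[simp] lemma mk4_0 (a b c d : ℝ) : mk4 a b c d 0 = a := by
  simp [mk4, EuclideanSpace.single_apply]
@[simp] lemma mk4_1 (a b c d : ℝ) : mk4 a b c d 1 = b := by
  simp [mk4, EuclideanSpace.single_apply]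
@[simp] lemma mk4_2 (a b c d : ℝ) : mk4 a b c d 2 = c := by
  simp [mk4, EuclideanSpace.single_apply]
@[simp] lemma mk4_3 (a b c d : ℝ) : mk4 a b c d 3 = d := by
  simp [mk4, EuclideanSpace.single_apply]

lemma eq_mk7 {x : E 7} (h5 : x 5 = 0) (h6 : x 6 = 0) :
    x = mk7 (x 0) (x 1) (x 2) (x 3) (x 4) := by
  ext i
  fin_cases i <;> simp [h5, h6]

lemma mk4_eq_iff {v : E 4} {a b c d : ℝ} :
    mk4 a b c d = v ↔ a = v 0 ∧ b = v 1 ∧ c = v 2 ∧ d = v 3 := by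
  constructor
  · intro h; rw [← h]; simp
  · rintro ⟨h0, h1, h2, h3⟩
    ext i
    fin_cases i <;> simpa

-- scalar functions
def cC (x : E 7) : ℝ := x 1^2 + x 2^2
def rR (x : E 7) : ℝ := Real.sqrt (1 - cC x)
def hH (x : E 7) : ℝ := Real.sqrt (1/2 - cC x)
def kK (x : E 7) : ℝ := Real.sqrt 2 * (rR x - hH x) / (rR x - x 0)

lemma sqrt2_pos : (0:ℝ) < Real.sqrt 2 := Real.sqrt_pos.2 (by norm_num)
lemma sqrt2_sq : Real.sqrt 2 ^ 2 = 2 := Real.sq_sqrt (by norm_num)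

-- facts on Delta'
lemma Delta'_facts {x : E 7} (hx : x ∈ Delta') :
    0 ≤ cC x ∧ cC x ≤ 1/2 ∧ rR x ^ 2 = 1 - cC x ∧ hH x ^ 2 = 1/2 - cC x ∧
    0 < rR x ∧ 0 ≤ hH x ∧ hH x < rR x ∧ x 0 ≤ hH x ∧ 0 < rR x - x 0 ∧
    x 3^2 + x 4^2 = rR x ^2 - x 0 ^2 ∧ 0 < kK x ∧ -(rR x) ≤ x 0 := by
  obtain ⟨hxS, hf⟩ := hx
  have hs := sum_eq_one hxS
  have hmax : max (x 0) 0 ^ 2 ≤ 1/2 - cC x := by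
    unfold f7 at hf; unfold cC; nlinarith [hf]
  have hc0 : 0 ≤ cC x := by unfold cC; positivity
  have hc : cC x ≤ 1/2 := by nlinarith [sq_nonneg (max (x 0) 0)]
  have hr2 : rR x ^ 2 = 1 - cC x := Real.sq_sqrt (by linarith)
  have hh2 : hH x ^ 2 = 1/2 - cC x := Real.sq_sqrt (by linarith)
  have hrpos : 0 < rR x := Real.sqrt_pos.2 (by linarith)
  have hhnn : 0 ≤ hH x := Real.sqrt_nonneg _
  have hrh : hH x < rR x := by nlinarith
  have hu : x 0 ≤ hH x := by
    have h1 : max (x 0) 0 ≤ hH x := by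
      nlinarith [le_max_right (x 0) (0:ℝ), hmax, hh2]
    exact le_trans (le_max_left _ _) h1
  have hden : 0 < rR x - x 0 := by linarith
  have hq : x 3^2 + x 4^2 = rR x ^2 - x 0^2 := by
    rw [hr2]; unfold cC at hc0 ⊢; linarith
  have hk : 0 < kK x := div_pos (mul_pos sqrt2_pos (by linarith)) hden
  have hur : -(rR x) ≤ x 0 := by nlinarith [sq_nonneg (x 3), sq_nonneg (x 4)]
  exact ⟨hc0, hc, hr2, hh2, hrpos, hhnn, hrh, hu, hden, hq, hk, hur⟩

def Psi (x : E 7) : E 4 :=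
  mk4 (Real.sqrt 2 * x 1) (Real.sqrt 2 * x 2) (kK x * x 3) (kK x * x 4)

def n4 (v : E 4) : ℝ :=
  max (Real.sqrt (v 0^2 + v 1^2)) (Real.sqrt (v 2^2 + v 3^2))

lemma n4_nonneg (v : E 4) : 0 ≤ n4 v :=
  le_trans (Real.sqrt_nonneg _) (le_max_left _ _)

lemma n4_le_norm (v : E 4) : n4 v ≤ ‖v‖ := by
  have h : ‖v‖ = Real.sqrt (v 0^2 + v 1^2 + v 2^2 + v 3^2) := by
    rw [show v 0^2 + v 1^2 + v 2^2 + v 3^2 = ‖v‖^2 from (norm_sq_4 v).symm,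
      Real.sqrt_sq (norm_nonneg v)]
  rw [h, n4]
  exact max_le (Real.sqrt_le_sqrt (by nlinarith [sq_nonneg (v 2), sq_nonneg (v 3)]))
    (Real.sqrt_le_sqrt (by nlinarith [sq_nonneg (v 0), sq_nonneg (v 1)]))

lemma n4_eq_zero {v : E 4} (h : n4 v = 0) : v = 0 := by
  have h1 : Real.sqrt (v 0^2 + v 1^2) = 0 := le_antisymm (h ▸ le_max_left _ _) (Real.sqrt_nonneg _)
  have h2 : Real.sqrt (v 2^2 + v 3^2) = 0 := le_antisymm (h ▸ le_max_right _ _) (Real.sqrt_nonneg _)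
  have e1 : v 0^2 + v 1^2 ≤ 0 := by
    by_contra hcon; push_neg at hcon
    exact absurd h1 (ne_of_gt (Real.sqrt_pos.2 hcon))
  have e2 : v 2^2 + v 3^2 ≤ 0 := by
    by_contra hcon; push_neg at hcon
    exact absurd h2 (ne_of_gt (Real.sqrt_pos.2 hcon))
  have : v 0 = 0 ∧ v 1 = 0 ∧ v 2 = 0 ∧ v 3 = 0 := by
    constructor; nlinarith [sq_nonneg (v 0), sq_nonneg (v 1)]
    constructor; nlinarith [sq_nonneg (v 0), sq_nonneg (v 1)]
    constructor; nlinarith [sq_nonneg (v 2), sq_nonneg (v 3)]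
    nlinarith [sq_nonneg (v 2), sq_nonneg (v 3)]
  obtain ⟨a, b, c, d⟩ := this
  ext i; fin_cases i <;> simpa

lemma n4_smul (t : ℝ) (ht : 0 ≤ t) (v : E 4) : n4 (t • v) = t * n4 v := by
  have hap : ∀ i : Fin 4, (t • v) i = t * v i := fun i => rfl
  unfold n4
  rw [hap, hap, hap, hap]
  have h1 : (t * v 0)^2 + (t * v 1)^2 = t^2 * (v 0^2 + v 1^2) := by ring
  have h2 : (t * v 2)^2 + (t * v 3)^2 = t^2 * (v 2^2 + v 3^2) := by ring
  rw [h1, h2, Real.sqrt_mul (sq_nonneg t), Real.sqrt_mul (sq_nonneg t),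
    Real.sqrt_sq ht, mul_max_of_nonneg _ _ ht]

def Mmap (v : E 4) : E 4 := (n4 v / ‖v‖) • v

lemma n4_zero : n4 (0 : E 4) = 0 := by
  unfold n4; simp

lemma Mmap_zero : Mmap (0 : E 4) = 0 := smul_zero _

lemma norm_Mmap (v : E 4) : ‖Mmap v‖ = n4 v := by
  by_cases h : v = 0
  · subst h; rw [Mmap, smul_zero, norm_zero, n4_zero]
  · rw [Mmap, norm_smul, Real.norm_eq_abs,
      abs_of_nonneg (div_nonneg (n4_nonneg v) (norm_nonneg v)),
      div_mul_cancel₀ _ (norm_ne_zero_iff.2 h)]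

lemma Mmap_eq_zero {v : E 4} (h : Mmap v = 0) : v = 0 := by
  have := norm_Mmap v
  rw [h, norm_zero] at this
  exact n4_eq_zero this.symm

lemma Mmap_injective : Function.Injective Mmap := by
  intro v w hvw
  by_cases hv : v = 0
  · subst hv
    rw [Mmap_zero] at hvw
    exact (Mmap_eq_zero hvw.symm).symm
  · have hw : w ≠ 0 := by
      intro hw0; subst hw0
      rw [Mmap_zero] at hvw
      exact hv (Mmap_eq_zero hvw)
    have hnv : n4 v ≠ 0 := fun h => hv (n4_eq_zero h)
    have hnw : n4 w ≠ 0 := fun h => hw (n4_eq_zero h)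
    have hN : n4 v = n4 w := by rw [← norm_Mmap v, ← norm_Mmap w, hvw]
    have hrec : ∀ u : E 4, u ≠ 0 → u = (‖u‖ / n4 u) • Mmap u := by
      intro u hu
      rw [Mmap, smul_smul, div_mul_div_comm,
        mul_comm (‖u‖) (n4 u), div_self (by
          exact mul_ne_zero (fun h => hu (n4_eq_zero h)) (norm_ne_zero_iff.2 hu)), one_smul]
    have hz : Mmap v ≠ 0 := fun h => hv (Mmap_eq_zero h)
    have hnz : n4 (Mmap v) ≠ 0 := fun h => hz (n4_eq_zero h)
    have hvn : n4 v = (‖v‖ / n4 v) * n4 (Mmap v) := by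
      conv_lhs => rw [hrec v hv]
      rw [n4_smul _ (div_nonneg (norm_nonneg v) (n4_nonneg v))]
    have hwn : n4 w = (‖w‖ / n4 w) * n4 (Mmap w) := by
      conv_lhs => rw [hrec w hw]
      rw [n4_smul _ (div_nonneg (norm_nonneg w) (n4_nonneg w))]
    have hnorm : ‖v‖ = ‖w‖ := by
      rw [hvw] at hvn
      rw [← hN] at hwn
      have h1 := hvn.symm.trans hwn
      have hnzM : n4 (Mmap w) ≠ 0 := fun h => (fun hz' => hw (Mmap_eq_zero hz')) (n4_eq_zero h)
      field_simp at h1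
      linarith
    rw [hrec v hv, hrec w hw, hvw, hnorm, hN]

lemma continuous_n4 : Continuous n4 := by
  unfold n4
  exact (Real.continuous_sqrt.comp (((cont_apply4 0).pow 2).add ((cont_apply4 1).pow 2))).max
    (Real.continuous_sqrt.comp (((cont_apply4 2).pow 2).add ((cont_apply4 3).pow 2)))

lemma continuous_Mmap : Continuous Mmap := by
  rw [continuous_iff_continuousAt]
  intro v
  by_cases hv : v = 0
  · subst hv
    rw [Metric.continuousAt_iff]
    intro ε hε
    refine ⟨ε, hε, fun {x} hx => ?_⟩
    rw [Mmap_zero, dist_eq_norm, sub_zero, norm_Mmap]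
    calc n4 x ≤ ‖x‖ := n4_le_norm x
    _ = dist x 0 := by rw [dist_eq_norm, sub_zero]
    _ < ε := hx
  · exact ((continuous_n4.continuousAt.div continuous_norm.continuousAt
      (norm_ne_zero_iff.2 hv)).smul continuousAt_id)




lemma key_ineq {x : E 7} (hx : x ∈ Delta') : kK x ^2 * (x 3^2 + x 4^2) ≤ 1 := by
  obtain ⟨hc0, hc, hr2, hh2, hrpos, hhnn, hrh, hu, hden, hq, hk, hur⟩ := Delta'_facts hx
  set r := rR x; set h := hH x; set u := x 0
  have h2 : 2*(r^2 - h^2) = 1 := by rw [hr2, hh2]; ring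
  rw [hq, kK, div_pow, mul_pow, sqrt2_sq, div_mul_eq_mul_div, div_le_one (by positivity)]
  nlinarith [mul_nonneg (mul_nonneg (mul_nonneg hrpos.le (by linarith : (0:ℝ) ≤ r - u))
      (by linarith : (0:ℝ) ≤ r - h)) (by linarith : (0:ℝ) ≤ h - u), sq_nonneg (r-u)]

lemma n4_Psi_le {x : E 7} (hx : x ∈ Delta') : n4 (Psi x) ≤ 1 := by
  obtain ⟨hc0, hc, hr2, hh2, hrpos, hhnn, hrh, hu, hden, hq, hk, hur⟩ := Delta'_facts hx
  have hcc : cC x ≤ 1/2 := hc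
  unfold n4 Psi
  simp only [mk4_0, mk4_1, mk4_2, mk4_3]
  apply max_le
  · refine Real.sqrt_le_one.mpr ?_
    have : (Real.sqrt 2 * x 1)^2 + (Real.sqrt 2 * x 2)^2 = 2 * cC x := by
      rw [mul_pow, mul_pow, sqrt2_sq]; unfold cC; ring
    rw [this]; linarith
  · refine Real.sqrt_le_one.mpr ?_
    have : (kK x * x 3)^2 + (kK x * x 4)^2 = kK x^2 * (x 3^2 + x 4^2) := by ring
    rw [this]; exact key_ineq hx

lemma Psi_injOn {x y : E 7} (hx : x ∈ Delta') (hy : y ∈ Delta') (hxy : Psi x = Psi y) :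
    x = y := by
  obtain ⟨hc0, hc, hr2, hh2, hrpos, hhnn, hrh, hu, hden, hq, hk, hur⟩ := Delta'_facts hx
  obtain ⟨hc0', hc', hr2', hh2', hrpos', hhnn', hrh', hu', hden', hq', hk', hur'⟩ := Delta'_facts hy
  have e0 : Real.sqrt 2 * x 1 = Real.sqrt 2 * y 1 := by
    have := congrArg (fun v : E 4 => v 0) hxy; simpa [Psi] using this
  have e1 : Real.sqrt 2 * x 2 = Real.sqrt 2 * y 2 := by
    have := congrArg (fun v : E 4 => v 1) hxy; simpa [Psi] using this
  have e2 : kK x * x 3 = kK y * y 3 := by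
    have := congrArg (fun v : E 4 => v 2) hxy; simpa [Psi] using this
  have e3 : kK x * x 4 = kK y * y 4 := by
    have := congrArg (fun v : E 4 => v 3) hxy; simpa [Psi] using this
  have hx1 : x 1 = y 1 := mul_left_cancel₀ sqrt2_pos.ne' e0
  have hx2 : x 2 = y 2 := mul_left_cancel₀ sqrt2_pos.ne' e1
  have hcc : cC x = cC y := by unfold cC; rw [hx1, hx2]
  have hrr : rR x = rR y := by unfold rR; rw [hcc]
  have hhh : hH x = hH y := by unfold hH; rw [hcc]
  set r := rR x with hrdef
  set h := hH x with hhdef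
  set u := x 0
  set w := y 0
  rw [← hrr] at hr2' hrpos' hden' hq' hur'
  rw [← hhh] at hh2' hrh' hu'
  have hn : kK x^2 * (x 3^2 + x 4^2) = kK y^2 * (y 3^2 + y 4^2) := by
    have l1 : kK x^2 * (x 3^2 + x 4^2) = (kK x * x 3)^2 + (kK x * x 4)^2 := by ring
    have l2 : kK y^2 * (y 3^2 + y 4^2) = (kK y * y 3)^2 + (kK y * y 4)^2 := by ring
    rw [l1, l2, e2, e3]
  rw [hq, hq'] at hn
  have hkx : kK x = Real.sqrt 2 * (r - h) / (r - u) := by rw [kK, ← hrdef, ← hhdef]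
  have hrhp : (0:ℝ) < r - h := by linarith
  have hky : kK y = Real.sqrt 2 * (r - h) / (r - w) := by rw [kK, ← hrr, ← hhh]
  rw [hkx, hky, div_pow, mul_pow, sqrt2_sq, div_pow, mul_pow, sqrt2_sq,
    div_mul_eq_mul_div, div_mul_eq_mul_div, div_eq_div_iff (pow_pos hden 2).ne' (pow_pos hden' 2).ne'] at hn
  have hposf : (0:ℝ) < 2*(r-h)^2*(r-u)*(r-w) :=
    mul_pos (mul_pos (mul_pos two_pos (pow_pos hrhp 2)) hden) hden' 
  have key2 : (2*(r-h)^2*(r-u)*(r-w)) * ((r+u)*(r-w)) =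
      (2*(r-h)^2*(r-u)*(r-w)) * ((r+w)*(r-u)) := by linear_combination hn
  have hcancel := mul_left_cancel₀ (ne_of_gt hposf) key2
  have hru : r * u = r * w := by linear_combination hcancel/2
  have huw : u = w := mul_left_cancel₀ hrpos.ne' hru
  have hkk : kK x = kK y := by rw [hkx, hky, huw]
  have hx3 : x 3 = y 3 := mul_left_cancel₀ hk.ne' (by rw [e2, ← hkk])
  have hx4 : x 4 = y 4 := mul_left_cancel₀ hk.ne' (by rw [e3, ← hkk])
  have h5x := hx.1.2.1; have h6x := hx.1.2.2
  have h5y := hy.1.2.1; have h6y := hy.1.2.2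
  rw [eq_mk7 h5x h6x, eq_mk7 h5y h6y]
  rw [show x 0 = u from rfl, show y 0 = w from rfl, huw, hx1, hx2, hx3, hx4]

lemma Psi_surj {v : E 4} (hv : n4 v ≤ 1) : ∃ x ∈ Delta', Psi x = v := by
  have hs2 := sqrt2_sq
  have hs2p := sqrt2_pos
  have hA : v 0^2 + v 1^2 ≤ 1 := by
    have h1 : Real.sqrt (v 0^2 + v 1^2) ≤ 1 := le_trans (le_max_left _ _) hv
    nlinarith [Real.sq_sqrt (show (0:ℝ) ≤ v 0^2 + v 1^2 by positivity),
      Real.sqrt_nonneg (v 0^2 + v 1^2)]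
  have hB : v 2^2 + v 3^2 ≤ 1 := by
    have h1 : Real.sqrt (v 2^2 + v 3^2) ≤ 1 := le_trans (le_max_right _ _) hv
    nlinarith [Real.sq_sqrt (show (0:ℝ) ≤ v 2^2 + v 3^2 by positivity),
      Real.sqrt_nonneg (v 2^2 + v 3^2)]
  set c := (v 0^2 + v 1^2)/2 with hcdef
  have hc0 : 0 ≤ c := by positivity
  have hc : c ≤ 1/2 := by rw [hcdef]; linarith
  set r := Real.sqrt (1 - c) with hrdef
  set h := Real.sqrt (1/2 - c) with hhdef
  have hr2 : r^2 = 1 - c := Real.sq_sqrt (by linarith)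
  have hh2 : h^2 = 1/2 - c := Real.sq_sqrt (by linarith)
  have hrpos : 0 < r := Real.sqrt_pos.2 (by linarith)
  have hhnn : 0 ≤ h := Real.sqrt_nonneg _
  have hrh : h < r := by nlinarith
  have hrhpos : 0 < r - h := by linarith
  have h2 : 2*(r^2 - h^2) = 1 := by rw [hr2, hh2]; ring
  set m := (v 2^2 + v 3^2)/(2*(r-h)^2) with hmdef
  have hm0 : 0 ≤ m := by positivity
  have hm1 : 0 < m + 1 := by linarith
  set u := r*(m-1)/(m+1) with hudef
  have hru : r - u = 2*r/(m+1) := by rw [hudef]; field_simp; ring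
  have hru' : r + u = 2*m*r/(m+1) := by rw [hudef]; field_simp; ring
  have hrupos : 0 < r - u := by rw [hru]; exact div_pos (by linarith) hm1
  set q0 := v 2 * (r-u)/(Real.sqrt 2*(r-h)) with hq0
  set q1 := v 3 * (r-u)/(Real.sqrt 2*(r-h)) with hq1
  clear_value c r h m u q0 q1
  have hd2 : (Real.sqrt 2*(r-h))^2 = 2*(r-h)^2 := by rw [mul_pow, sqrt2_sq]
  have hdpos : (0:ℝ) < 2*(r-h)^2 := by positivity
  have hm2 : v 2^2 + v 3^2 = m*(2*(r-h)^2) := by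
    rw [hmdef]; field_simp
  have hmu : m * (r - u) = r + u := by
    rw [hru, hru']; field_simp
  have hqsum : q0^2 + q1^2 = r^2 - u^2 := by
    have l1 : q0^2 + q1^2 = (v 2^2 + v 3^2) * (r-u)^2/(2*(r-h)^2) := by
      rw [hq0, hq1, div_pow, div_pow, hd2, ← add_div]
      congr 1
      ring
    have l2 : m*(2*(r-h)^2) * (r-u)^2/(2*(r-h)^2) = m*(r-u)^2 := by
      rw [mul_comm m (2*(r-h)^2), mul_assoc, mul_div_cancel_left₀ _ hdpos.ne']
    rw [l1, hm2, l2]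
    linear_combination (r - u) * hmu
  refine ⟨mk7 u (v 0/Real.sqrt 2) (v 1/Real.sqrt 2) q0 q1, ?_, ?_⟩
  · constructor
    · apply mem_S4'_of (by simp) (by simp)
      simp only [mk7_0, mk7_1, mk7_2, mk7_3, mk7_4]
      rw [div_pow, div_pow, sqrt2_sq]
      linarith [hqsum, hr2]
    · show f7 _ ≤ 1/2
      unfold f7
      simp only [mk7_0, mk7_1, mk7_2]
      rw [div_pow, div_pow, sqrt2_sq]
      rcases le_or_gt u 0 with hu0 | hu0
      · rw [max_eq_right hu0]
        norm_num
        linarith only [hc, hcdef.ge, hcdef.le]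
      · have hBm : m * (2*(r-h)^2) ≤ 1 := by rw [← hm2]; exact hB
        have huh : u ≤ h := by
          rw [hudef, div_le_iff₀ hm1]
          nlinarith only [hBm, h2, hrhpos]
        have hu2 : u^2 ≤ h^2 := pow_le_pow_left₀ hu0.le huh 2
        rw [max_eq_left hu0.le]
        linarith only [hu2, hh2, hc, hcdef.ge, hcdef.le]
  · have hcx : cC (mk7 u (v 0/Real.sqrt 2) (v 1/Real.sqrt 2) q0 q1) = c := by
      unfold cC
      simp only [mk7_1, mk7_2]
      rw [div_pow, div_pow, sqrt2_sq, hcdef]; ring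
    have hkx : kK (mk7 u (v 0/Real.sqrt 2) (v 1/Real.sqrt 2) q0 q1) =
        Real.sqrt 2 * (r - h) / (r - u) := by
      rw [kK, rR, hH, hcx, mk7_0, ← hrdef, ← hhdef]
    rw [Psi, hkx]
    simp only [mk7_1, mk7_2, mk7_3, mk7_4]
    rw [mk4_eq_iff]
    have hdne : Real.sqrt 2 * (r-h) ≠ 0 := ne_of_gt (mul_pos hs2p hrhpos)
    refine ⟨?_, ?_, ?_, ?_⟩
    · field_simp
    · field_simp
    · rw [hq0]; field_simp
    · rw [hq1]; field_simp

lemma continuousOn_Psi : ContinuousOn Psi Delta' := by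
  have hc : Continuous cC := ((cont_apply7 1).pow 2).add ((cont_apply7 2).pow 2)
  have hr : Continuous rR := Real.continuous_sqrt.comp (continuous_const.sub hc)
  have hh : Continuous hH := Real.continuous_sqrt.comp (continuous_const.sub hc)
  have hk : ContinuousOn kK Delta' := by
    apply ContinuousOn.div
    · exact (continuous_const.mul (hr.sub hh)).continuousOn
    · exact (hr.sub (cont_apply7 0)).continuousOn
    · intro x hx
      exact (Delta'_facts hx).2.2.2.2.2.2.2.2.1.ne'
  unfold Psi mk4
  apply ContinuousOn.add
  apply ContinuousOn.add
  apply ContinuousOn.add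
  · exact ((continuous_const.mul (cont_apply7 1)).continuousOn).smul continuousOn_const
  · exact ((continuous_const.mul (cont_apply7 2)).continuousOn).smul continuousOn_const
  · exact (hk.mul (cont_apply7 3).continuousOn).smul continuousOn_const
  · exact (hk.mul (cont_apply7 4).continuousOn).smul continuousOn_const


def Fmap (x : E 7) : E 4 := Mmap (Psi x)

lemma Fmap_mem {x : E 7} (hx : x ∈ Delta') : Fmap x ∈ Metric.closedBall (0 : E 4) 1 := by
  rw [Metric.mem_closedBall, dist_zero_right, Fmap, norm_Mmap]
  exact n4_Psi_le hx

lemma Fmap_injOn {x y : E 7} (hx : x ∈ Delta') (hy : y ∈ Delta') (h : Fmap x = Fmap y) :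
    x = y :=
  Psi_injOn hx hy (Mmap_injective h)

lemma mk4_zero : mk4 0 0 0 0 = (0 : E 4) := by
  ext i; fin_cases i <;> simp

lemma Mmap_section {w : E 4} (hw : w ≠ 0) : Mmap ((‖w‖/n4 w) • w) = w := by
  have hnw : n4 w ≠ 0 := fun h => hw (n4_eq_zero h)
  have hnwp : 0 < n4 w := lt_of_le_of_ne (n4_nonneg w) (Ne.symm hnw)
  have hwn : (0:ℝ) < ‖w‖ := norm_pos_iff.2 hw
  have ht : 0 ≤ ‖w‖/n4 w := div_nonneg hwn.le hnwp.le
  rw [Mmap, n4_smul _ ht, norm_smul, Real.norm_eq_abs, abs_of_nonneg ht, smul_smul]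
  have hs : ‖w‖ / n4 w * n4 w / (‖w‖ / n4 w * ‖w‖) * (‖w‖ / n4 w) = 1 := by
    field_simp
  rw [hs, one_smul]

lemma Fmap_surj {w : E 4} (hw : w ∈ Metric.closedBall (0 : E 4) 1) :
    ∃ x ∈ Delta', Fmap x = w := by
  rw [Metric.mem_closedBall, dist_zero_right] at hw
  by_cases hw0 : w = 0
  · refine ⟨mk7 (-1) 0 0 0 0, ⟨mem_S4'_of (by simp) (by simp) (by norm_num), ?_⟩, ?_⟩
    · show f7 _ ≤ 1/2
      unfold f7
      norm_num
    · have hPsi : Psi (mk7 (-1) 0 0 0 0) = (0 : E 4) := by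
        unfold Psi
        rw [mk7_1, mk7_2, mk7_3, mk7_4, mul_zero, mul_zero, mk4_zero]
      rw [Fmap, hPsi, Mmap_zero, hw0]
  · have hnw : n4 w ≠ 0 := fun h => hw0 (n4_eq_zero h)
    have hnwp : 0 < n4 w := lt_of_le_of_ne (n4_nonneg w) (Ne.symm hnw)
    have ht : 0 ≤ ‖w‖/n4 w := div_nonneg (norm_nonneg w) hnwp.le
    have hv : n4 ((‖w‖/n4 w) • w) ≤ 1 := by
      rw [n4_smul _ ht, div_mul_cancel₀ _ hnw]
      exact hw
    obtain ⟨x, hx, hPsi⟩ := Psi_surj hv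
    exact ⟨x, hx, by rw [Fmap, hPsi, Mmap_section hw0]⟩

lemma isClosed_S4' : IsClosed S4' := by
  show IsClosed ((Metric.sphere (0 : E 7) 1) ∩ ({x : E 7 | x 5 = 0} ∩ {x : E 7 | x 6 = 0}))
  refine Metric.isClosed_sphere.inter (IsClosed.inter ?_ ?_)
  · exact isClosed_eq (cont_apply7 5) continuous_const
  · exact isClosed_eq (cont_apply7 6) continuous_const

lemma isClosed_Delta' : IsClosed Delta' := by
  show IsClosed (S4' ∩ {x : E 7 | f7 x ≤ 1/2})
  exact isClosed_S4'.inter (isClosed_le continuous_f7 continuous_const)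

lemma isCompact_Delta' : IsCompact Delta' := by
  apply Metric.isCompact_of_isClosed_isBounded isClosed_Delta'
  apply Metric.isBounded_closedBall (x := (0:E 7)) (r := 1) |>.subset
  intro x hx
  rw [Metric.mem_closedBall, dist_zero_right]
  have : ‖x‖ = 1 := by simpa using hx.1.1
  rw [this]

lemma part1 : Nonempty (DeltaSigma ≃ₜ (Metric.closedBall (0 : E 4) 1)) := by
  rw [DeltaSigma_eq]
  haveI : CompactSpace Delta' := isCompact_iff_compactSpace.mp isCompact_Delta'
  have hφm : ∀ x : Delta', Fmap x.1 ∈ Metric.closedBall (0 : E 4) 1 := fun x => Fmap_mem x.2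
  let φ : Delta' → Metric.closedBall (0 : E 4) 1 := fun x => ⟨Fmap x.1, hφm x⟩
  have hbij : Function.Bijective φ := by
    constructor
    · intro a b hab
      exact Subtype.ext (Fmap_injOn a.2 b.2 (Subtype.ext_iff.1 hab))
    · intro w
      obtain ⟨x, hx, hfx⟩ := Fmap_surj w.2
      exact ⟨⟨x, hx⟩, Subtype.ext hfx⟩
  have hcont : Continuous φ := by
    apply Continuous.subtype_mk
    exact (continuous_Mmap.comp_continuousOn continuousOn_Psi).comp_continuous
      continuous_subtype_val (fun x => x.2)
  exact ⟨Continuous.homeoOfEquivCompactToT2 (f := Equiv.ofBijective φ hbij) hcont⟩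


lemma continuous_f7S : Continuous fun x : S4' => f7 x.1 :=
  continuous_f7.comp continuous_subtype_val

lemma preimage_T_eq :
    (fun x : S4' => (x : E 7)) ⁻¹' DeltaSigma
      = (fun x : S4' => f7 x.1) ⁻¹' Set.Iic (1/2) := by
  ext x
  simp only [Set.mem_preimage, Set.mem_Iic]
  exact mem_Delta_iff x.2

lemma preimage_Sigma_eq :
    (fun x : S4' => (x : E 7)) ⁻¹' SigmaSet = {x : S4' | f7 x.1 = 1/2} := by
  ext x
  simp only [Set.mem_preimage, Set.mem_setOf_eq]
  exact mem_Sigma_iff x.2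

lemma tn_mem (n : ℕ) : ((n:ℝ)+2)⁻¹ ∈ Set.Ioo (0:ℝ) 1 := by
  constructor
  · positivity
  · rw [inv_lt_one_iff₀]
    right
    have : (0:ℝ) ≤ (n:ℝ) := Nat.cast_nonneg n
    linarith

lemma tn_tendsto : Filter.Tendsto (fun n : ℕ => ((n:ℝ)+2)⁻¹) Filter.atTop (nhds 0) :=
  tendsto_inv_atTop_zero.comp (Filter.tendsto_atTop_add_const_right _ 2 tendsto_natCast_atTop_atTop)

lemma closure_aux {y : E 7} (hsph : y ∈ Metric.sphere (0:E 7) 1) (hy5 : y 5 = 0)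
    (hy6 : y 6 = 0) (vA vB : E 7)
    (hsplit : ∀ i, vA i + vB i = y i)
    (hA2 : vA 0^2 + vA 1^2 + vA 2^2 + vA 3^2 + vA 4^2 = 1/2)
    (hB2 : vB 0^2 + vB 1^2 + vB 2^2 + vB 3^2 + vB 4^2 = 1/2)
    (hOrth : vA 0 * vB 0 + vA 1 * vB 1 + vA 2 * vB 2 + vA 3 * vB 3 + vA 4 * vB 4 = 0)
    (hA5 : vA 5 = 0) (hA6 : vA 6 = 0) (hB5 : vB 5 = 0) (hB6 : vB 6 = 0)
    (hfG : ∀ t ∈ Set.Ioo (0:ℝ) 1,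
      1/2 < f7 (Real.sqrt (1+t) • vA + Real.sqrt (1-t) • vB)) :
    (⟨y, hsph, hy5, hy6⟩ : S4') ∈
      closure ((fun x : S4' => f7 x.1) ⁻¹' Set.Ioi (1/2)) := by
  obtain ⟨G, hG⟩ : ∃ G : ℝ → E 7, G = fun t => Real.sqrt (1+t) • vA + Real.sqrt (1-t) • vB :=
    ⟨_, rfl⟩
  have hGi : ∀ (t : ℝ) (i : Fin 7), G t i = Real.sqrt (1+t) * vA i + Real.sqrt (1-t) * vB i := by
    intro t i
    rw [hG]
    rfl
  have hGmem : ∀ t ∈ Set.Ioo (0:ℝ) 1, G t ∈ S4' := by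
    intro t ht
    obtain ⟨ht0, ht1⟩ := ht
    have sq1 : Real.sqrt (1+t)^2 = 1+t := Real.sq_sqrt (by linarith)
    have sq2 : Real.sqrt (1-t)^2 = 1-t := Real.sq_sqrt (by linarith)
    apply mem_S4'_of
    · rw [hGi, hA5, hB5, mul_zero, mul_zero, add_zero]
    · rw [hGi, hA6, hB6, mul_zero, mul_zero, add_zero]
    · rw [hGi t 0, hGi t 1, hGi t 2, hGi t 3, hGi t 4]
      have expand : (Real.sqrt (1+t) * vA 0 + Real.sqrt (1-t) * vB 0)^2
          + (Real.sqrt (1+t) * vA 1 + Real.sqrt (1-t) * vB 1)^2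
          + (Real.sqrt (1+t) * vA 2 + Real.sqrt (1-t) * vB 2)^2
          + (Real.sqrt (1+t) * vA 3 + Real.sqrt (1-t) * vB 3)^2
          + (Real.sqrt (1+t) * vA 4 + Real.sqrt (1-t) * vB 4)^2
          = Real.sqrt (1+t)^2 * (vA 0^2 + vA 1^2 + vA 2^2 + vA 3^2 + vA 4^2)
            + Real.sqrt (1-t)^2 * (vB 0^2 + vB 1^2 + vB 2^2 + vB 3^2 + vB 4^2)
            + 2 * (Real.sqrt (1+t) * Real.sqrt (1-t))
              * (vA 0 * vB 0 + vA 1 * vB 1 + vA 2 * vB 2 + vA 3 * vB 3 + vA 4 * vB 4) := by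
        ring
      rw [expand, sq1, sq2, hA2, hB2, hOrth]
      ring
  have hG0 : G 0 = y := by
    ext i
    rw [hGi]
    simp only [add_zero, sub_zero, Real.sqrt_one, one_mul]
    exact hsplit i
  have hGcont : Continuous G := by
    rw [hG]
    apply Continuous.add
    · exact (Real.continuous_sqrt.comp (continuous_const.add continuous_id)).smul continuous_const
    · exact (Real.continuous_sqrt.comp (continuous_const.sub continuous_id)).smul continuous_const
  have hten : Filter.Tendsto (fun n : ℕ => (⟨G (((n:ℝ)+2)⁻¹), hGmem _ (tn_mem n)⟩ : S4'))
      Filter.atTop (nhds ⟨y, hsph, hy5, hy6⟩) := by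
    rw [tendsto_subtype_rng]
    have : Filter.Tendsto (fun n : ℕ => G (((n:ℝ)+2)⁻¹)) Filter.atTop (nhds (G 0)) :=
      (hGcont.tendsto 0).comp tn_tendsto
    rw [hG0] at this
    exact this
  apply mem_closure_of_tendsto hten
  filter_upwards with n
  show (1:ℝ)/2 < f7 (G (((n:ℝ)+2)⁻¹))
  rw [hG]
  exact hfG _ (tn_mem n)

lemma mem_closure_compl {x : S4'} (hf : f7 x.1 = 1/2) :
    x ∈ closure ((fun x : S4' => f7 x.1) ⁻¹' Set.Ioi (1/2)) := by
  obtain ⟨y, hy⟩ := x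
  obtain ⟨hsph, hy5, hy6⟩ := hy
  have hsum := sum_eq_one ⟨hsph, hy5, hy6⟩
  simp only at hf
  rcases le_or_gt 0 (y 0) with h0 | h0
  · have hfa : y 0^2 + y 1^2 + y 2^2 = 1/2 := by
      unfold f7 at hf; rw [max_eq_left h0] at hf; linarith
    have hfb : y 3^2 + y 4^2 = 1/2 := by linarith
    refine closure_aux hsph hy5 hy6 (mk7 (y 0) (y 1) (y 2) 0 0) (mk7 0 0 0 (y 3) (y 4))
      ?_ ?_ ?_ ?_ ?_ ?_ ?_ ?_ ?_
    · intro i; fin_cases i <;> simp [hy5, hy6]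
    · simp only [mk7_0, mk7_1, mk7_2, mk7_3, mk7_4]; linarith [hfa]
    · simp only [mk7_0, mk7_1, mk7_2, mk7_3, mk7_4]; linarith [hfb]
    · simp only [mk7_0, mk7_1, mk7_2, mk7_3, mk7_4]; ring
    · exact mk7_5 _ _ _ _ _
    · exact mk7_6 _ _ _ _ _
    · exact mk7_5 _ _ _ _ _
    · exact mk7_6 _ _ _ _ _
    · intro t ht
      obtain ⟨ht0, ht1⟩ := ht
      have sq1 : Real.sqrt (1+t)^2 = 1+t := Real.sq_sqrt (by linarith)
      have hs1 : 0 ≤ Real.sqrt (1+t) := Real.sqrt_nonneg _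
      have hap : ∀ i : Fin 7, (Real.sqrt (1+t) • (mk7 (y 0) (y 1) (y 2) 0 0)
          + Real.sqrt (1-t) • (mk7 0 0 0 (y 3) (y 4))) i
          = Real.sqrt (1+t) * (mk7 (y 0) (y 1) (y 2) 0 0) i
            + Real.sqrt (1-t) * (mk7 0 0 0 (y 3) (y 4)) i := fun i => rfl
      unfold f7
      rw [hap 0, hap 1, hap 2]
      simp only [mk7_0, mk7_1, mk7_2, mul_zero, add_zero, zero_add]
      rw [max_eq_left (mul_nonneg hs1 h0)]
      nlinarith [sq1, hfa]
  · have hfa : y 1^2 + y 2^2 = 1/2 := by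
      unfold f7 at hf; rw [max_eq_right h0.le] at hf; nlinarith [hf]
    have hfb : y 0^2 + y 3^2 + y 4^2 = 1/2 := by linarith
    refine closure_aux hsph hy5 hy6 (mk7 0 (y 1) (y 2) 0 0) (mk7 (y 0) 0 0 (y 3) (y 4))
      ?_ ?_ ?_ ?_ ?_ ?_ ?_ ?_ ?_
    · intro i; fin_cases i <;> simp [hy5, hy6]
    · simp only [mk7_0, mk7_1, mk7_2, mk7_3, mk7_4]; linarith [hfa]
    · simp only [mk7_0, mk7_1, mk7_2, mk7_3, mk7_4]; linarith [hfb]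
    · simp only [mk7_0, mk7_1, mk7_2, mk7_3, mk7_4]; ring
    · exact mk7_5 _ _ _ _ _
    · exact mk7_6 _ _ _ _ _
    · exact mk7_5 _ _ _ _ _
    · exact mk7_6 _ _ _ _ _
    · intro t ht
      obtain ⟨ht0, ht1⟩ := ht
      have sq1 : Real.sqrt (1+t)^2 = 1+t := Real.sq_sqrt (by linarith)
      have hs2' : 0 ≤ Real.sqrt (1-t) := Real.sqrt_nonneg _
      have hap : ∀ i : Fin 7, (Real.sqrt (1+t) • (mk7 0 (y 1) (y 2) 0 0)
          + Real.sqrt (1-t) • (mk7 (y 0) 0 0 (y 3) (y 4))) i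
          = Real.sqrt (1+t) * (mk7 0 (y 1) (y 2) 0 0) i
            + Real.sqrt (1-t) * (mk7 (y 0) 0 0 (y 3) (y 4)) i := fun i => rfl
      unfold f7
      rw [hap 0, hap 1, hap 2]
      simp only [mk7_0, mk7_1, mk7_2, mul_zero, add_zero, zero_add]
      rw [max_eq_right (mul_nonpos_of_nonneg_of_nonpos hs2' h0.le)]
      nlinarith [sq1, hfa]

lemma part2 :
    frontier ((fun x : S4' => (x : E 7)) ⁻¹' DeltaSigma)
      = (fun x : S4' => (x : E 7)) ⁻¹' SigmaSet := by
  rw [preimage_T_eq, preimage_Sigma_eq]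
  have hclosed : IsClosed ((fun x : S4' => f7 x.1) ⁻¹' Set.Iic (1/2)) :=
    IsClosed.preimage continuous_f7S isClosed_Iic
  have hcompl : ((fun x : S4' => f7 x.1) ⁻¹' Set.Iic (1/2))ᶜ
      = (fun x : S4' => f7 x.1) ⁻¹' Set.Ioi (1/2) := by
    ext z
    simp [not_le]
  apply Set.Subset.antisymm
  · intro x hx
    rw [frontier_eq_closure_inter_closure] at hx
    obtain ⟨hx1, hx2⟩ := hx
    have hle : f7 x.1 ≤ 1/2 := by
      have := hclosed.closure_eq ▸ hx1
      exact this
    have hge : 1/2 ≤ f7 x.1 := by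
      have hsub : ((fun x : S4' => f7 x.1) ⁻¹' Set.Iic (1/2))ᶜ ⊆ {z : S4' | 1/2 ≤ f7 z.1} := by
        intro z hz
        rw [hcompl] at hz
        have hz' : 1/2 < f7 z.1 := hz
        exact le_of_lt hz' 
      have hcl : IsClosed {z : S4' | 1/2 ≤ f7 z.1} :=
        isClosed_le continuous_const continuous_f7S
      exact closure_minimal hsub hcl hx2
    exact le_antisymm hle hge
  · intro x hx
    have hx' : f7 x.1 = 1/2 := hx
    rw [frontier_eq_closure_inter_closure]
    constructor
    · have hmem : x ∈ (fun x : S4' => f7 x.1) ⁻¹' Set.Iic (1/2) := by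
        simp only [Set.mem_preimage, Set.mem_Iic]
        exact le_of_eq hx'
      exact subset_closure hmem
    · rw [hcompl]
      exact mem_closure_compl hx'

end St4

theorem statement4 :
    Nonempty (DeltaSigma ≃ₜ (Metric.closedBall (0 : E 4) 1)) ∧
    frontier ((fun x : S4' => (x : E 7)) ⁻¹' DeltaSigma)
      = (fun x : S4' => (x : E 7)) ⁻¹' SigmaSet :=
  ⟨St4.part1, St4.part2⟩
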